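/- Let p ∈ N, p ≥ 1, and G(x_1,x_2) = (x_2 + p x_1 (1+x_1)^{−p−1})/((1+x_1)^{−p} − x_2), defined for x_1 ≥ 0, 0 ≤ x_2 < (1+x_1)^{−p}. For every ε ∈ (0,1), along the curve x_1 = t, x_2 = ε(1+t)^{−p}, the function G stays bounded as t → +∞; hence G does not tend to +∞ at the boundary of its domain. -/

import Mathlib

open Filter

/-- For `F(x) = (1+x)^{-p}`, `p ∈ ℕ⁺`, the function
`G(x₁,x₂) = (x₂ + p x₁ (1+x₁)^{-p-1})/((1+x₁)^{-p} - x₂)` stays bounded (converges)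
along the curve `x₁ = t`, `x₂ = ε(1+t)^{-p}` as `t → +∞`, for every `ε ∈ (0,1)`;
hence it does not tend to `+∞` at the boundary. -/
theorem stmt_16 (p : ℕ) (hp : 1 ≤ p) (G : ℝ → ℝ → ℝ)
    (hG : ∀ x1 x2, G x1 x2 =
      (x2 + p * x1 * (1 + x1) ^ (-(p : ℝ) - 1)) / ((1 + x1) ^ (-(p : ℝ)) - x2)) :
    ∀ ε : ℝ, 0 < ε → ε < 1 →
      (∃ L : ℝ, Tendsto (fun t => G t (ε * (1 + t) ^ (-(p : ℝ)))) atTop (nhds L)) ∧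
      ¬ Tendsto (fun t => G t (ε * (1 + t) ^ (-(p : ℝ)))) atTop atTop := by
  intro ε hε hε1
  have hinv : Tendsto (fun t : ℝ => (1 + t)⁻¹) atTop (nhds 0) :=
    tendsto_inv_atTop_zero.comp (tendsto_atTop_add_const_left _ 1 tendsto_id)
  have h1 : Tendsto (fun t : ℝ => (ε + p * (1 - (1 + t)⁻¹)) / (1 - ε)) atTop
      (nhds ((ε + p * (1 - 0)) / (1 - ε))) :=
    ((((hinv.const_sub 1).const_mul (p : ℝ)).const_add ε).div_const (1 - ε))
  have heq : ∀ᶠ t in atTop,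
      G t (ε * (1 + t) ^ (-(p : ℝ))) = (ε + p * (1 - (1 + t)⁻¹)) / (1 - ε) := by
    filter_upwards [eventually_gt_atTop 0] with t ht
    have h1t : (0 : ℝ) < 1 + t := by linarith
    have hA : (0 : ℝ) < (1 + t) ^ (-(p : ℝ)) := Real.rpow_pos_of_pos h1t _
    have hsplit : (1 + t) ^ (-(p : ℝ) - 1) = (1 + t) ^ (-(p : ℝ)) * (1 + t)⁻¹ := by
      rw [show -(p : ℝ) - 1 = -(p : ℝ) + (-1) by ring, Real.rpow_add h1t,
        Real.rpow_neg_one]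
    rw [hG, hsplit]
    have hfrac : 1 - (1 + t)⁻¹ = t / (1 + t) := by
      field_simp; ring
    rw [hfrac]
    set A := (1 + t) ^ (-(p : ℝ)) with hAdef
    have hnum : ε * A + ↑p * t * (A * (1 + t)⁻¹) = A * (ε + ↑p * (t / (1 + t))) := by
      field_simp
    have hden : A - ε * A = A * (1 - ε) := by ring
    rw [hnum, hden, mul_div_mul_left _ _ hA.ne']
  have hlim := h1.congr' (heq.mono fun t h => h.symm)
  refine ⟨⟨_, hlim⟩, not_tendsto_atTop_of_tendsto_nhds hlim⟩
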